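/- (Draisma's lemma) Let (L,w) be a valued field extending (K,v). Consider a finite system over K consisting of linear equations a_{i1}x₁ + ⋯ + a_{it}x_t = b_i (1 ≤ i ≤ r) and valuation inequalities w(a_{i1}x₁ + ⋯ + a_{it}x_t) ≥ λ_i (r+1 ≤ i ≤ r+s), with all a_{ij}, b_i ∈ K and λ_i ∈ ℝ. If this system has a solution in L^t, then it has a solution in K^t. -/

import Mathlib

open scoped BigOperators

section Aux

variable {F : Type*} [Field F] (u : F → WithTop ℝ)

lemma u_one (hu0 : ∀ x : F, u x = ⊤ ↔ x = 0)
    (humul : ∀ x y : F, u (x * y) = u x + u y) : u 1 = 0 := by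
  have h := humul 1 1
  rw [mul_one] at h
  have hne : u (1 : F) ≠ ⊤ := by simp [hu0]
  obtain ⟨r, hr⟩ := WithTop.ne_top_iff_exists.mp hne
  rw [← hr] at h ⊢
  have : r + r = r := by exact_mod_cast h.symm
  have : r = 0 := by linarith
  simp [this]

lemma u_neg (hu0 : ∀ x : F, u x = ⊤ ↔ x = 0)
    (humul : ∀ x y : F, u (x * y) = u x + u y) (x : F) : u (-x) = u x := by
  have hm1 : u (-1 : F) = 0 := by
    have h := humul (-1) (-1)
    rw [neg_mul_neg, one_mul, u_one u hu0 humul] at h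
    have hne : u (-1 : F) ≠ ⊤ := by simp [hu0]
    obtain ⟨r, hr⟩ := WithTop.ne_top_iff_exists.mp hne
    rw [← hr] at h ⊢
    have : (0 : ℝ) = r + r := by exact_mod_cast h
    have : r = 0 := by linarith
    simp [this]
  have := humul (-1) x
  rw [neg_one_mul, hm1, zero_add] at this
  exact this

lemma u_sub (hu0 : ∀ x : F, u x = ⊤ ↔ x = 0)
    (humul : ∀ x y : F, u (x * y) = u x + u y)
    (huadd : ∀ x y : F, min (u x) (u y) ≤ u (x + y)) (x y : F) :
    min (u x) (u y) ≤ u (x - y) := by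
  have := huadd x (-y)
  rw [u_neg u hu0 humul] at this
  simpa [sub_eq_add_neg] using this

lemma wt_le_shift {a b : WithTop ℝ} {c : ℝ} (h : a + (c : WithTop ℝ) ≤ b) :
    a ≤ b + ((-c : ℝ) : WithTop ℝ) := by
  have : a = a + (c : WithTop ℝ) + ((-c : ℝ) : WithTop ℝ) := by
    rw [add_assoc, ← WithTop.coe_add]
    simp
  rw [this]
  exact add_le_add_left h _

/-- ultrametric Helly / ball intersection lemma, in scaled form. -/
lemma balls (hu0 : ∀ x : F, u x = ⊤ ↔ x = 0)
    (humul : ∀ x y : F, u (x * y) = u x + u y)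
    (huadd : ∀ x y : F, min (u x) (u y) ≤ u (x + y))
    {ι : Type} [Fintype ι] (aa : ι → F) (ha : ∀ i, aa i ≠ 0)
    (rr : ι → F) (lam : ι → WithTop ℝ)
    (h : ∀ i j, min (lam i + u (aa j)) (lam j + u (aa i)) ≤ u (aa j * rr i - aa i * rr j)) :
    ∃ x : F, ∀ i, lam i ≤ u (aa i * x + rr i) := by
  rcases isEmpty_or_nonempty ι with hE | hNE
  · exact ⟨0, fun i => (hE.false i).elim⟩
  have hva : ∀ i, ∃ r : ℝ, u (aa i) = (r : WithTop ℝ) := by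
    intro i
    have : u (aa i) ≠ ⊤ := by simp [hu0, ha i]
    obtain ⟨r, hr⟩ := WithTop.ne_top_iff_exists.mp this
    exact ⟨r, hr.symm⟩
  choose va hva using hva
  -- maximize g i = lam i - va i
  obtain ⟨i0, hi0⟩ := Finite.exists_max (fun i => lam i + ((-(va i) : ℝ) : WithTop ℝ))
  -- inverse valuation
  have hinv : u ((aa i0)⁻¹) = ((-(va i0) : ℝ) : WithTop ℝ) := by
    have h1 := humul (aa i0) (aa i0)⁻¹
    rw [mul_inv_cancel₀ (ha i0), u_one u hu0 humul, hva i0] at h1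
    have hne : u ((aa i0)⁻¹) ≠ ⊤ := by simp [hu0, ha i0]
    obtain ⟨s, hs⟩ := WithTop.ne_top_iff_exists.mp hne
    rw [← hs] at h1 ⊢
    have : (0 : ℝ) = va i0 + s := by exact_mod_cast h1
    have : s = -(va i0) := by linarith
    simp [this]
  refine ⟨-(rr i0) * (aa i0)⁻¹, fun i => ?_⟩
  have key : aa i * (-(rr i0) * (aa i0)⁻¹) + rr i
      = (aa i0 * rr i - aa i * rr i0) * (aa i0)⁻¹ := by
    field_simp
    rw [sub_div, mul_div_cancel_left₀ _ (ha i0)]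
    ring
  rw [key, humul, hinv]
  have hmin := h i i0
  rw [hva i, hva i0] at hmin
  rcases min_cases (lam i + ((va i0 : ℝ) : WithTop ℝ)) (lam i0 + ((va i : ℝ) : WithTop ℝ)) with ⟨he, _⟩ | ⟨he, _⟩ <;> rw [he] at hmin
  · exact wt_le_shift hmin
  · have e1 : lam i = lam i + ((-(va i) : ℝ) : WithTop ℝ) + ((va i : ℝ) : WithTop ℝ) := by
      rw [add_assoc, ← WithTop.coe_add]; simp
    calc lam i = lam i + ((-(va i) : ℝ) : WithTop ℝ) + ((va i : ℝ) : WithTop ℝ) := e1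
      _ ≤ lam i0 + ((-(va i0) : ℝ) : WithTop ℝ) + ((va i : ℝ) : WithTop ℝ) :=
          add_le_add_left (hi0 i) _
      _ = lam i0 + ((va i : ℝ) : WithTop ℝ) + ((-(va i0) : ℝ) : WithTop ℝ) := by
          rw [add_assoc, add_assoc, add_comm (((-(va i0) : ℝ) : WithTop ℝ)) _]
      _ ≤ u (aa i0 * rr i - aa i * rr i0) + ((-(va i0) : ℝ) : WithTop ℝ) :=
          add_le_add_left hmin _

end Aux

section Main

variable {K L : Type*} [Field K] [Field L] [Algebra K L]

lemma subst_identity {F : Type*} [Field F] (ψ : K →+* F) {t : ℕ}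
    (arow : Fin (t+1) → K) (b0 : K) (j0 : Fin (t+1))
    (d : Fin (t+1) → K) (β : K) (y : Fin t → F) :
    ∑ j, ψ (d j) * (Fin.insertNth (α := fun _ => F) j0
        ((ψ b0 - ∑ k, ψ (arow (j0.succAbove k)) * y k) * (ψ (arow j0))⁻¹) y) j + ψ β
      = ∑ k, ψ (d (j0.succAbove k) - d j0 * arow (j0.succAbove k) / arow j0) * y k
        + ψ (β + d j0 * b0 / arow j0) := by
  set X : ∀ _ : Fin (t+1), F := Fin.insertNth (α := fun _ => F) j0
      ((ψ b0 - ∑ k, ψ (arow (j0.succAbove k)) * y k) * (ψ (arow j0))⁻¹) y with hX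
  rw [Fin.sum_univ_succAbove (f := fun j => ψ (d j) * X j) j0]
  simp only [hX, Fin.insertNth_apply_same, Fin.insertNth_apply_succAbove, map_sub, map_add,
    map_mul, map_div₀]
  simp only [div_eq_mul_inv, sub_mul, Finset.sum_sub_distrib, mul_assoc, ← Finset.mul_sum]
  have hcomm : ∑ x : Fin t, ψ (arow (j0.succAbove x)) * ((ψ (arow j0))⁻¹ * y x)
      = (ψ (arow j0))⁻¹ * ∑ x : Fin t, ψ (arow (j0.succAbove x)) * y x := by
    rw [Finset.mul_sum]
    exact Finset.sum_congr rfl fun x _ => by ring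
  rw [hcomm]
  ring

variable (v : K → WithTop ℝ) (w : L → WithTop ℝ)

lemma hv0 (hw0 : ∀ x : L, w x = ⊤ ↔ x = 0) (hext : ∀ α : K, w (algebraMap K L α) = v α)
    (x : K) : v x = ⊤ ↔ x = 0 := by
  rw [← hext, hw0]
  exact map_eq_zero (algebraMap K L)

lemma hvmul (hwmul : ∀ x y : L, w (x * y) = w x + w y)
    (hext : ∀ α : K, w (algebraMap K L α) = v α) (x y : K) : v (x * y) = v x + v y := by
  rw [← hext, ← hext, ← hext, map_mul]
  exact hwmul _ _

lemma hvadd (hwadd : ∀ x y : L, min (w x) (w y) ≤ w (x + y))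
    (hext : ∀ α : K, w (algebraMap K L α) = v α) (x y : K) :
    min (v x) (v y) ≤ v (x + y) := by
  rw [← hext, ← hext, ← hext, map_add]
  exact hwadd _ _

lemma ineq (hw0 : ∀ x : L, w x = ⊤ ↔ x = 0)
    (hwmul : ∀ x y : L, w (x * y) = w x + w y)
    (hwadd : ∀ x y : L, min (w x) (w y) ≤ w (x + y))
    (hext : ∀ α : K, w (algebraMap K L α) = v α) (t : ℕ) :
    ∀ (ι : Type) [Fintype ι] (A : ι → Fin t → K) (B : ι → K) (lam : ι → WithTop ℝ),
    (∃ x : Fin t → L, ∀ i, lam i ≤ w (∑ j, algebraMap K L (A i j) * x j + algebraMap K L (B i))) →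
    ∃ x : Fin t → K, ∀ i, lam i ≤ v (∑ j, A i j * x j + B i) := by
  induction t with
  | zero =>
    rintro ι _ A B lam ⟨x, hx⟩
    refine ⟨fun _ => 0, fun i => ?_⟩
    have := hx i
    simpa [hext] using this
  | succ t ih =>
    rintro ι _ A B lam ⟨x, hx⟩
    classical
    set φ := algebraMap K L with hφdef
    set al : ι → K := fun i => A i (Fin.last t) with hal
    let ι' := {i : ι // al i = 0} ⊕ ({i : ι // al i ≠ 0} × {i : ι // al i ≠ 0})
    let A' : ι' → Fin t → K := Sum.elim (fun i k => A i.1 k.castSucc)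
      (fun p k => al p.2.1 * A p.1.1 k.castSucc - al p.1.1 * A p.2.1 k.castSucc)
    let B' : ι' → K := Sum.elim (fun i => B i.1)
      (fun p => al p.2.1 * B p.1.1 - al p.1.1 * B p.2.1)
    let lam' : ι' → WithTop ℝ := Sum.elim (fun i => lam i.1)
      (fun p => min (lam p.1.1 + v (al p.2.1)) (lam p.2.1 + v (al p.1.1)))
    have hLsol : ∃ y : Fin t → L, ∀ i, lam' i ≤ w (∑ k, φ (A' i k) * y k + φ (B' i)) := by
      refine ⟨fun k => x k.castSucc, ?_⟩
      rintro (⟨i, hi⟩ | ⟨⟨i, hi⟩, ⟨j, hj⟩⟩)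
      · have hi' : A i (Fin.last t) = 0 := hi
        have := hx i
        rw [Fin.sum_univ_castSucc] at this
        simpa [A', B', lam', hi'] using this
      · have key : ∑ k, φ (A' (Sum.inr (⟨i,hi⟩,⟨j,hj⟩)) k) * x k.castSucc
            + φ (B' (Sum.inr (⟨i,hi⟩,⟨j,hj⟩)))
            = φ (al j) * (∑ j', φ (A i j') * x j' + φ (B i))
              - φ (al i) * (∑ j', φ (A j j') * x j' + φ (B j)) := by
          simp only [A', B', Sum.elim_inr, map_sub, map_mul]
          rw [Fin.sum_univ_castSucc (f := fun j' => φ (A i j') * x j'),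
              Fin.sum_univ_castSucc (f := fun j' => φ (A j j') * x j')]
          simp only [sub_mul, Finset.sum_sub_distrib, mul_assoc, ← Finset.mul_sum]
          ring
        rw [key]
        have h1 : lam i + v (al j) ≤ w (φ (al j) * (∑ j', φ (A i j') * x j' + φ (B i))) := by
          rw [hwmul, hext, add_comm (lam i) (v (al j))]
          exact add_le_add le_rfl (hx i)
        have h2 : lam j + v (al i) ≤ w (φ (al i) * (∑ j', φ (A j j') * x j' + φ (B j))) := by
          rw [hwmul, hext, add_comm (lam j) (v (al i))]
          exact add_le_add le_rfl (hx j)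
        exact le_trans (min_le_min h1 h2) (u_sub w hw0 hwmul hwadd _ _)
    obtain ⟨y, hy⟩ := ih ι' A' B' lam' hLsol
    have hb : ∃ xl : K, ∀ i : {i : ι // al i ≠ 0},
        lam i.1 ≤ v (al i.1 * xl + (∑ k, A i.1 k.castSucc * y k + B i.1)) := by
      refine balls v (hv0 v w hw0 hext) (hvmul v w hwmul hext) (hvadd v w hwadd hext)
        (ι := {i : ι // al i ≠ 0}) (fun i => al i.1) (fun i => i.2)
        (fun i => ∑ k, A i.1 k.castSucc * y k + B i.1) (fun i => lam i.1) ?_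
      intro p q
      have hpq := hy (Sum.inr (p, q))
      have key2 : ∑ k, A' (Sum.inr (p,q)) k * y k + B' (Sum.inr (p,q))
          = al q.1 * (∑ k, A p.1 k.castSucc * y k + B p.1)
            - al p.1 * (∑ k, A q.1 k.castSucc * y k + B q.1) := by
        simp only [A', B', Sum.elim_inr, sub_mul, Finset.sum_sub_distrib, mul_assoc,
          ← Finset.mul_sum]
        ring
      rw [key2] at hpq
      simpa [lam'] using hpq
    obtain ⟨xl, hxl⟩ := hb
    refine ⟨Fin.snoc y xl, fun i => ?_⟩
    rw [Fin.sum_univ_castSucc]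
    simp only [Fin.snoc_castSucc, Fin.snoc_last]
    by_cases hi : al i = 0
    · have := hy (Sum.inl ⟨i, hi⟩)
      have hi' : A i (Fin.last t) = 0 := hi
      rw [hi', zero_mul, add_zero]
      simpa [A', B', lam'] using this
    · have := hxl ⟨i, hi⟩
      have e : (∑ k, A i k.castSucc * y k) + A i (Fin.last t) * xl + B i
          = al i * xl + (∑ k, A i k.castSucc * y k + B i) := by
        rw [hal]; ring
      rw [e]
      exact this

end Main

section Main2

variable {K L : Type*} [Field K] [Field L] [Algebra K L]
  (v : K → WithTop ℝ) (w : L → WithTop ℝ)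

lemma main (hw0 : ∀ x : L, w x = ⊤ ↔ x = 0)
    (hwmul : ∀ x y : L, w (x * y) = w x + w y)
    (hwadd : ∀ x y : L, min (w x) (w y) ≤ w (x + y))
    (hext : ∀ α : K, w (algebraMap K L α) = v α) (t : ℕ) :
    ∀ (ι κ : Type) [Fintype ι] [Fintype κ]
    (a : ι → Fin t → K) (b : ι → K) (A : κ → Fin t → K) (B : κ → K) (lam : κ → WithTop ℝ),
    (∃ x : Fin t → L, (∀ i, ∑ j, algebraMap K L (a i j) * x j = algebraMap K L (b i)) ∧
        ∀ i, lam i ≤ w (∑ j, algebraMap K L (A i j) * x j + algebraMap K L (B i))) →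
    ∃ x : Fin t → K, (∀ i, ∑ j, a i j * x j = b i) ∧
        ∀ i, lam i ≤ v (∑ j, A i j * x j + B i) := by
  induction t with
  | zero =>
    rintro ι κ _ _ a b A B lam ⟨x, hxe, hxi⟩
    refine ⟨fun _ => 0, fun i => ?_, fun i => ?_⟩
    · have := hxe i
      simp only [Fin.sum_univ_zero] at this ⊢
      have hb : b i = 0 := by
        have := this.symm
        rwa [map_eq_zero] at this
      simp [hb]
    · have := hxi i
      simpa [hext] using this
  | succ t ih =>
    rintro ι κ _ _ a b A B lam ⟨x, hxe, hxi⟩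
    classical
    by_cases hz : ∀ i j, a i j = 0
    · have hb : ∀ i, b i = 0 := by
        intro i
        have := hxe i
        simp only [hz, map_zero, zero_mul, Finset.sum_const_zero] at this
        have := this.symm
        rwa [map_eq_zero] at this
      obtain ⟨x', hx'⟩ := ineq v w hw0 hwmul hwadd hext (t+1) κ A B lam ⟨x, hxi⟩
      exact ⟨x', fun i => by simp [hz, hb], hx'⟩
    · push_neg at hz
      obtain ⟨i0, j0, hc⟩ := hz
      set c := a i0 j0 with hcdef
      set φ := algebraMap K L with hφdef
      have hcL : φ c ≠ 0 := by
        rw [map_ne_zero]; exact hc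
      -- the new coefficients
      set aN : ι → Fin t → K := fun i k => a i (j0.succAbove k) - a i j0 * a i0 (j0.succAbove k) / c with haN
      set bN : ι → K := fun i => b i - a i j0 * b i0 / c with hbN
      set AN : κ → Fin t → K := fun i k => A i (j0.succAbove k) - A i j0 * a i0 (j0.succAbove k) / c with hAN
      set BN : κ → K := fun i => B i + A i j0 * b i0 / c with hBN
      -- the L-solution of the reduced system
      set y : Fin t → L := fun k => x (j0.succAbove k) with hy
      have hxeq : x = Fin.insertNth (α := fun _ => L) j0
          ((φ (b i0) - ∑ k, φ (a i0 (j0.succAbove k)) * y k) * (φ c)⁻¹) y := by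
        have h0 := hxe i0
        rw [Fin.sum_univ_succAbove (f := fun j => φ (a i0 j) * x j) j0] at h0
        have hsub : φ (b i0) - ∑ k, φ (a i0 (j0.succAbove k)) * y k = φ c * x j0 := by
          rw [hy, ← h0]; ring
        rw [hsub, mul_comm (φ c) (x j0), mul_assoc, mul_inv_cancel₀ hcL, mul_one]
        exact (Fin.insertNth_self_removeNth j0 x).symm
      have hLred : ∃ yy : Fin t → L,
          (∀ i, ∑ k, φ (aN i k) * yy k = φ (bN i)) ∧
          ∀ i, lam i ≤ w (∑ k, φ (AN i k) * yy k + φ (BN i)) := by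
        refine ⟨y, fun i => ?_, fun i => ?_⟩
        · have hid := subst_identity φ (a i0) (b i0) j0 (a i) 0 y
          rw [← hxeq, ← hcdef] at hid
          rw [map_zero, add_zero, zero_add, hxe i] at hid
          simp only [haN, hbN]
          rw [map_sub, eq_sub_iff_add_eq]
          exact hid.symm
        · have hid := subst_identity φ (a i0) (b i0) j0 (A i) (B i) y
          rw [← hxeq, ← hcdef] at hid
          simp only [hAN, hBN]
          rw [← hid]
          exact hxi i
      obtain ⟨yy, hye, hyi⟩ := ih ι κ aN bN AN BN lam hLred
      -- lift back to t+1 variables over K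
      set xl : K := (b i0 - ∑ k, a i0 (j0.succAbove k) * yy k) * c⁻¹ with hxl
      refine ⟨Fin.insertNth (α := fun _ => K) j0 xl yy, fun i => ?_, fun i => ?_⟩
      · have hid := subst_identity (RingHom.id K) (a i0) (b i0) j0 (a i) 0 yy
        simp only [RingHom.id_apply] at hid
        rw [← hcdef, add_zero, zero_add, ← hxl] at hid
        have h2 := hye i
        simp only [haN, hbN] at h2
        rw [hid, h2]
        ring
      · have hid := subst_identity (RingHom.id K) (a i0) (b i0) j0 (A i) (B i) yy
        simp only [RingHom.id_apply] at hid
        rw [← hcdef, ← hxl] at hid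
        have h2 := hyi i
        simp only [hAN, hBN] at h2
        rw [hid]
        exact h2

end Main2

/-- Draisma's lemma:  let `(L,w)` be a valued field extending `(K,v)`.  If a finite system
of `K`-linear equations `Σ_j a_{ij} x_j = b_i` and valuation inequalities
`w(Σ_j a'_{ij} x_j) ≥ λ_i` with coefficients in `K` has a solution in `L^t`, then it has a
solution in `K^t`. -/
theorem stmt16 {K L : Type*} [Field K] [Field L] [Algebra K L]
    (v : K → WithTop ℝ) (w : L → WithTop ℝ)
    (hw0 : ∀ x : L, w x = ⊤ ↔ x = 0)
    (hwmul : ∀ x y : L, w (x * y) = w x + w y)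
    (hwadd : ∀ x y : L, min (w x) (w y) ≤ w (x + y))
    (hext : ∀ α : K, w (algebraMap K L α) = v α)
    (t r s : ℕ)
    (a : Fin r → Fin t → K) (b : Fin r → K)
    (a' : Fin s → Fin t → K) (lam : Fin s → ℝ)
    (hsol : ∃ x : Fin t → L,
      (∀ i, ∑ j, algebraMap K L (a i j) * x j = algebraMap K L (b i)) ∧
      (∀ i, ((lam i : ℝ) : WithTop ℝ) ≤ w (∑ j, algebraMap K L (a' i j) * x j))) :
    ∃ x : Fin t → K,
      (∀ i, ∑ j, a i j * x j = b i) ∧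
      (∀ i, ((lam i : ℝ) : WithTop ℝ) ≤ v (∑ j, a' i j * x j)) := by
  obtain ⟨x, hxe, hxi⟩ := hsol
  obtain ⟨x', hx'e, hx'i⟩ := main v w hw0 hwmul hwadd hext t (Fin r) (Fin s) a b a'
    (fun _ => (0 : K)) (fun i => ((lam i : ℝ) : WithTop ℝ))
    ⟨x, hxe, fun i => by simpa using hxi i⟩
  exact ⟨x', hx'e, fun i => by simpa using hx'i i⟩
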